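/- Positivity of Ξ₁ beyond the critical point x† (step in the proof of Lemma 2). Let λ > 0 and c > 0, define Ξ₁(G) := 2λ · ∫_G^∞ e^{−λg}/ln(1 + c·g) dg − e^{−λG}/ln(1 + c·G), and let x† be the unique zero in (0, ∞) of x ↦ c/(1 + c·x) − λ·ln(1 + c·x). Then Ξ₁(G) > 0 for every G > x†. -/

import Mathlib

open MeasureTheory Set

lemma aux_hasDerivAt_exp_neg_mul (b x : ℝ) :
    HasDerivAt (fun y : ℝ => Real.exp (-b * y)) (Real.exp (-b * x) * (-b)) x := by
  have h1 : HasDerivAt (fun y : ℝ => -b * y) (-b) x := by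
    simpa using (hasDerivAt_id x).const_mul (-b)
  exact h1.exp

lemma aux_integral_exp_neg_mul_Ioi (b a : ℝ) (hb : 0 < b) :
    ∫ x in Set.Ioi a, Real.exp (-b * x) = Real.exp (-b * a) / b := by
  have h := MeasureTheory.integral_Ioi_of_hasDerivAt_of_tendsto
    (f := fun x => -Real.exp (-b * x) / b) (f' := fun x => Real.exp (-b * x)) (a := a) (m := 0)
    ?_ ?_ (exp_neg_integrableOn_Ioi a hb) ?_
  · rw [h]; ring
  · have hcont : Continuous fun x : ℝ => Real.exp (-b * x) := by fun_prop
    exact ((hcont.neg).div_const b).continuousWithinAt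
  · intro x _
    have := ((aux_hasDerivAt_exp_neg_mul b x).neg).div_const b
    exact this.congr_deriv (by field_simp)
  · have h0 : Filter.Tendsto (fun x : ℝ => Real.exp (-b * x)) Filter.atTop (nhds 0) := by
      have := Real.tendsto_exp_neg_atTop_nhds_zero.comp
        (Filter.tendsto_id.const_mul_atTop hb)
      apply this.congr
      intro x; simp [Function.comp, neg_mul]
    simpa using (h0.neg).div_const b

theorem Xi1_pos_beyond_critical (lam c : ℝ) (hlam : 0 < lam) (hc : 0 < c)
    (xd : ℝ) (hxd : 0 < xd)
    (hzero : c / (1 + c * xd) - lam * Real.log (1 + c * xd) = 0)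
    (huniq : ∀ y : ℝ, 0 < y → c / (1 + c * y) - lam * Real.log (1 + c * y) = 0 → y = xd) :
    ∀ G : ℝ, xd < G →
      0 < 2 * lam * (∫ g in Set.Ioi G, Real.exp (-lam * g) / Real.log (1 + c * g)) -
        Real.exp (-lam * G) / Real.log (1 + c * G) := by
  intro G hG
  have hGpos : 0 < G := hxd.trans hG
  have honex : ∀ x : ℝ, 0 < x → 1 < 1 + c * x := fun x hx => by nlinarith
  have hlog : ∀ x : ℝ, 0 < x → 0 < Real.log (1 + c * x) := fun x hx =>
    Real.log_pos (honex x hx)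
  set h : ℝ → ℝ := fun x => Real.log (1 + c * x) * Real.exp (-lam * x) with hh
  have hderiv : ∀ x ∈ Set.Ioi xd, HasDerivAt h
      (Real.exp (-lam * x) * (c / (1 + c * x) - lam * Real.log (1 + c * x))) x := by
    intro x hx
    have hxpos : 0 < x := hxd.trans hx
    have h1 : (0:ℝ) < 1 + c * x := lt_trans one_pos (honex x hxpos)
    have hin : HasDerivAt (fun y : ℝ => 1 + c * y) c x := by
      simpa using ((hasDerivAt_id x).const_mul c).const_add 1
    have hlogd : HasDerivAt (fun y : ℝ => Real.log (1 + c * y)) (c / (1 + c * x)) x :=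
      hin.log (ne_of_gt h1)
    have := hlogd.mul (aux_hasDerivAt_exp_neg_mul lam x)
    exact this.congr_deriv (by ring)
  have hphi_neg : ∀ x : ℝ, xd < x → c / (1 + c * x) - lam * Real.log (1 + c * x) < 0 := by
    intro x hx
    have hxpos : 0 < x := hxd.trans hx
    have h1d : (0:ℝ) < 1 + c * xd := lt_trans one_pos (honex xd hxd)
    have h1x : (0:ℝ) < 1 + c * x := lt_trans one_pos (honex x hxpos)
    have hlt : 1 + c * xd < 1 + c * x := by nlinarith
    have h2 : c / (1 + c * x) < c / (1 + c * xd) :=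
      div_lt_div_of_pos_left hc h1d hlt
    have h3 : Real.log (1 + c * xd) < Real.log (1 + c * x) := Real.log_lt_log h1d hlt
    nlinarith [hlog xd hxd]
  have hanti : StrictAntiOn h (Set.Ici xd) := by
    apply strictAntiOn_of_deriv_neg (convex_Ici xd)
    · apply ContinuousOn.mul
      · apply ContinuousOn.log (by fun_prop)
        intro x hx
        exact ne_of_gt (lt_trans one_pos (honex x (lt_of_lt_of_le hxd hx)))
      · fun_prop
    · intro x hx
      rw [interior_Ici] at hx
      rw [(hderiv x hx).deriv]
      exact mul_neg_of_pos_of_neg (Real.exp_pos _) (hphi_neg x hx)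
  have hhGpos : 0 < h G := mul_pos (hlog G hGpos) (Real.exp_pos _)
  set f : ℝ → ℝ := fun g => Real.exp (-lam * g) / Real.log (1 + c * g) with hf
  set l : ℝ → ℝ := fun g => Real.exp (-(2 * lam) * g) / h G with hl
  have hexp2 : ∀ g : ℝ, Real.exp (-lam * g) * Real.exp (-lam * g) = Real.exp (-(2 * lam) * g) := by
    intro g; rw [← Real.exp_add]; ring_nf
  have hpt : ∀ g ∈ Set.Ioi G, l g < f g := by
    intro g hg
    have hg' : G < g := hg
    have hgpos : 0 < g := hGpos.trans hg'
    have hhg : h g < h G := hanti (le_of_lt hG) (le_of_lt (hG.trans hg')) hg'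
    have hhgpos : 0 < h g := mul_pos (hlog g hgpos) (Real.exp_pos _)
    have key : f g = Real.exp (-(2 * lam) * g) / h g := by
      simp only [hf, hh]
      rw [div_eq_div_iff (ne_of_gt (hlog g hgpos))
        (ne_of_gt (mul_pos (hlog g hgpos) (Real.exp_pos (-lam * g))))]
      linear_combination Real.log (1 + c * g) * hexp2 g
    rw [key, hl]
    exact div_lt_div_of_pos_left (Real.exp_pos _) hhgpos hhg
  have hmeas : AEStronglyMeasurable f (volume.restrict (Set.Ioi G)) := by
    apply ContinuousOn.aestronglyMeasurable _ measurableSet_Ioi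
    apply ContinuousOn.div (by fun_prop)
    · apply ContinuousOn.log (by fun_prop)
      intro x hx
      exact ne_of_gt (lt_trans one_pos (honex x (hGpos.trans hx)))
    · intro x hx
      exact ne_of_gt (hlog x (hGpos.trans hx))
  have hfint : IntegrableOn f (Set.Ioi G) := by
    apply Integrable.mono' (g := fun g => Real.exp (-lam * g) / Real.log (1 + c * G))
      ((exp_neg_integrableOn_Ioi G hlam).div_const _) hmeas
    filter_upwards [ae_restrict_mem measurableSet_Ioi] with g hg
    have hg' : G < g := hg
    have hgpos : 0 < g := hGpos.trans hg'
    have h1 : Real.log (1 + c * G) ≤ Real.log (1 + c * g) := by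
      apply Real.log_le_log (lt_trans one_pos (honex G hGpos))
      nlinarith
    simp only [hf, Real.norm_eq_abs]
    rw [abs_of_nonneg (le_of_lt (div_pos (Real.exp_pos _) (hlog g hgpos)))]
    exact div_le_div_of_nonneg_left (le_of_lt (Real.exp_pos _)) (hlog G hGpos) h1
  have hlint : IntegrableOn l (Set.Ioi G) :=
    (exp_neg_integrableOn_Ioi G (by linarith)).div_const _
  have hlval : ∫ g in Set.Ioi G, l g
      = Real.exp (-lam * G) / Real.log (1 + c * G) / (2 * lam) := by
    simp only [hl]
    rw [MeasureTheory.integral_div,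
      aux_integral_exp_neg_mul_Ioi _ _ (by linarith : (0:ℝ) < 2 * lam)]
    simp only [hh]
    have hL := hlog G hGpos
    rw [← hexp2 G]
    have hE := Real.exp_pos (-lam * G)
    field_simp
  have hdiffpos : 0 < ∫ g in Set.Ioi G, (f g - l g) := by
    rw [MeasureTheory.setIntegral_pos_iff_support_of_nonneg_ae]
    · have hsub : Set.Ioi G ⊆ Function.support (fun g => f g - l g) ∩ Set.Ioi G :=
        fun x hx => ⟨ne_of_gt (sub_pos.mpr (hpt x hx)), hx⟩
      calc (0:ENNReal) < volume (Set.Ioi G) := by simp [Real.volume_Ioi]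
        _ ≤ _ := measure_mono hsub
    · filter_upwards [ae_restrict_mem measurableSet_Ioi] with g hg
      exact le_of_lt (sub_pos.mpr (hpt g hg))
    · exact hfint.sub hlint
  have hlt : ∫ g in Set.Ioi G, l g < ∫ g in Set.Ioi G, f g := by
    rw [MeasureTheory.integral_sub hfint hlint, sub_pos] at hdiffpos
    exact hdiffpos
  rw [hlval] at hlt
  have h2lam : (0:ℝ) < 2 * lam := by linarith
  rw [sub_pos]
  calc Real.exp (-lam * G) / Real.log (1 + c * G)
      = (Real.exp (-lam * G) / Real.log (1 + c * G) / (2 * lam)) * (2 * lam) := by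
        exact (div_mul_cancel₀ _ (ne_of_gt h2lam)).symm
    _ < (∫ g in Set.Ioi G, f g) * (2 * lam) := mul_lt_mul_of_pos_right hlt h2lam
    _ = 2 * lam * (∫ g in Set.Ioi G, f g) := by ring
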